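/- For fundamental weights of sp_{2n}: Σ_{k≥0} #S(ω_{i−2k}) = C(2n, i), where the sum is over all k with i − 2k ≥ 0 and S(ω_0) is the one-point set {0}. -/

import Mathlib

open scoped BigOperators TensorProduct

namespace SpPBW

/-- Coded positive roots of `C_n`: a pair `(i,c)` with `1 ≤ i ≤ c ≤ 2n - i`.
For `c ≤ n` this codes the root `α_{i,c} = α_i + ⋯ + α_c`; for `c > n` it codes the
root `α_{i, (2n-c)-bar} = α_i + ⋯ + α_n + α_{n-1} + ⋯ + α_{2n-c}`. -/
def ValidPair (n : ℕ) (a : ℕ × ℕ) : Prop :=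
  1 ≤ a.1 ∧ a.1 ≤ a.2 ∧ a.2 ≤ 2 * n - a.1

instance (n : ℕ) : DecidablePred (ValidPair n) := fun a =>
  decidable_of_iff (1 ≤ a.1 ∧ a.1 ≤ a.2 ∧ a.2 ≤ 2 * n - a.1) Iff.rfl

def validFinset (n : ℕ) : Finset (ℕ × ℕ) :=
  (Finset.Icc 1 n ×ˢ Finset.Icc 1 (2 * n)).filter fun a => ValidPair n a

/-- The order (2.8) on positive roots: `rootLt a b` means `f_a < f_b`,
i.e. `f_b` is larger (rows from top to bottom, within a row from left to right). -/
def rootLt (a b : ℕ × ℕ) : Prop := a.1 < b.1 ∨ (a.1 = b.1 ∧ a.2 < b.2)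

def DyckStep (a b : ℕ × ℕ) : Prop := b = (a.1, a.2 + 1) ∨ b = (a.1 + 1, a.2)

/-- A symplectic Dyck path (Definition 1.2). -/
def IsDyck (n : ℕ) (p : List (ℕ × ℕ)) : Prop :=
  p ≠ [] ∧ (∀ a ∈ p, ValidPair n a) ∧ (∃ i, p.head? = some (i, i)) ∧
  p.Chain' DyckStep ∧ (∃ j, p.getLast? = some (j, j) ∨ p.getLast? = some (j, 2 * n - j))

/-- The bound `m_i + ⋯ + m_j` (resp. `m_i + ⋯ + m_n`) for a Dyck path starting at `α_i`
and ending at `α_j` (resp. at `α_{j,j-bar}`). -/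
def pathBound (n : ℕ) (m : ℕ → ℕ) (p : List (ℕ × ℕ)) : ℕ :=
  match p.head?, p.getLast? with
  | some a, some b =>
      if b.1 = b.2 then ∑ l ∈ Finset.Icc a.1 b.2, m l else ∑ l ∈ Finset.Icc a.1 n, m l
  | _, _ => 0

/-- `InS n m s` says that the multi-exponent `s` is a lattice point of the
polytope `P(λ)` for `λ = Σ m_i ω_i`, i.e. `s ∈ S(λ)`. -/
def InS (n : ℕ) (m : ℕ → ℕ) (s : ℕ × ℕ → ℕ) : Prop :=
  (∀ a, ¬ ValidPair n a → s a = 0) ∧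
  ∀ p : List (ℕ × ℕ), IsDyck n p → (p.map s).sum ≤ pathBound n m p

/-- The coefficient vector of the fundamental weight `ω_i`. -/
def fundWt (i : ℕ) : ℕ → ℕ := fun l => if l = i then 1 else 0

/-- total degree of a multi-exponent -/
def deg (n : ℕ) (s : ℕ × ℕ → ℕ) : ℕ := ∑ a ∈ validFinset n, s a

/-- `s_{i,•}`, the sum of the exponents in the `i`-th row -/
def rowDeg (n : ℕ) (s : ℕ × ℕ → ℕ) (i : ℕ) : ℕ :=
  ∑ a ∈ (validFinset n).filter (fun a => a.1 = i), s a

/-- `d(s) < d(t)` lexicographically, reading rows from the bottom (`i = n`) up. -/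
def dLt (n : ℕ) (s t : ℕ × ℕ → ℕ) : Prop :=
  ∃ i, 1 ≤ i ∧ i ≤ n ∧ rowDeg n s i < rowDeg n t i ∧
    ∀ j, i < j → j ≤ n → rowDeg n s j = rowDeg n t j

def dEq (n : ℕ) (s t : ℕ × ℕ → ℕ) : Prop := ∀ i, rowDeg n s i = rowDeg n t i

/-- `f^s > f^t` in the lexicographic order induced by the variable order (2.8). -/
def lexGt (n : ℕ) (s t : ℕ × ℕ → ℕ) : Prop :=
  ∃ a, ValidPair n a ∧ t a < s a ∧ ∀ b, ValidPair n b → rootLt a b → s b = t b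

/-- `mOrd n s t` is the relation `f^s ◁ f^t` of Definition 2.7 (`f^s` "greater"). -/
def mOrd (n : ℕ) (s t : ℕ × ℕ → ℕ) : Prop :=
  deg n t < deg n s ∨ (deg n s = deg n t ∧ (dLt n s t ∨ (dEq n s t ∧ lexGt n s t)))

/-- multiplicity of the simple root `α_l` in the coded root `a` -/
def coeffRoot (n : ℕ) (a : ℕ × ℕ) (l : ℕ) : ℕ :=
  (if a.1 ≤ l ∧ l ≤ a.2 ∧ l ≤ n then 1 else 0) +
  (if n < a.2 ∧ 2 * n - a.2 ≤ l ∧ l ≤ n - 1 then 1 else 0)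

/-- the Cartan matrix of type `C_n` (indices `1,…,n`, `α_n` long):
`cartanC n i j = ⟨α_i, α_j^∨⟩` -/
def cartanC (n i j : ℕ) : ℤ :=
  if i = j then 2 else if i = n ∧ j + 1 = n then -2
  else if i + 1 = j ∨ j + 1 = i then -1 else 0

/-- `⟨α_a, α_i^∨⟩` for a coded positive root `a` -/
def rootPairing (n : ℕ) (a : ℕ × ℕ) (i : ℕ) : ℤ :=
  ∑ l ∈ Finset.Icc 1 n, (coeffRoot n a l : ℤ) * cartanC n l i

/-- `R_i^s`: coded roots `β` in the support of `s` with `(ω_i, β) ≠ 0`. -/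
def Ris (n i : ℕ) (s : ℕ × ℕ → ℕ) : Set (ℕ × ℕ) :=
  {a | ValidPair n a ∧ s a ≠ 0 ∧ a.1 ≤ i ∧ i ≤ a.2}

/-- the set of minimal elements of `R_i^s` with respect to the order (2.8) -/
def Mis (n i : ℕ) (s : ℕ × ℕ → ℕ) : Set (ℕ × ℕ) :=
  {a | a ∈ Ris n i s ∧ ∀ b ∈ Ris n i s, ¬ rootLt b a}

-- the indicator multi-exponent `m_i^s` of `M_i^s`
open Classical in
noncomputable def mInd (n i : ℕ) (s : ℕ × ℕ → ℕ) : ℕ × ℕ → ℕ :=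
  fun a => if a ∈ Mis n i s then 1 else 0


section Lie

variable {L V : Type*} [LieRing L] [LieAlgebra ℂ L]
variable [AddCommGroup V] [Module ℂ V] [LieRingModule L V] [LieModule ℂ L V]

/-- `applyList [x₁,…,x_l] w = x₁ ⋅ (x₂ ⋅ ( ⋯ (x_l ⋅ w)))` -/
def applyList (xs : List L) (w : V) : V := xs.foldr (fun x u => ⁅x, u⁆) w

/-- the Chevalley–Serre relations for the Cartan matrix of type `C_n`, for
generators `h i, e i, f i`, `1 ≤ i ≤ n` -/
def SerreRels (n : ℕ) (h e f : ℕ → L) : Prop :=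
  ∀ i ∈ Finset.Icc 1 n, ∀ j ∈ Finset.Icc 1 n,
    ⁅h i, h j⁆ = 0 ∧
    ⁅e i, f j⁆ = (if i = j then h i else 0) ∧
    ⁅h i, e j⁆ = (cartanC n j i : ℂ) • e j ∧
    ⁅h i, f j⁆ = (-(cartanC n j i) : ℂ) • f j ∧
    (i ≠ j → ((LieAlgebra.ad ℂ L (e i)) ^ (1 - cartanC n j i).toNat) (e j) = 0 ∧
      ((LieAlgebra.ad ℂ L (f i)) ^ (1 - cartanC n j i).toNat) (f j) = 0)

/-- `L` is generated as a Lie algebra by the Chevalley generators; together with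
`SerreRels` this pins `L` down as a quotient of `sp_{2n}`. -/
def Generates (n : ℕ) (h e f : ℕ → L) : Prop :=
  LieSubalgebra.lieSpan ℂ L {x | ∃ i, 1 ≤ i ∧ i ≤ n ∧ (x = h i ∨ x = e i ∨ x = f i)} = ⊤

/-- `F a` is a nonzero vector of `h`-weight `-α_a`, i.e. a root vector `f_{α_a} ∈ n⁻`. -/
def RootVectors (n : ℕ) (h : ℕ → L) (F : ℕ × ℕ → L) : Prop :=
  ∀ a, ValidPair n a → F a ≠ 0 ∧
    ∀ i ∈ Finset.Icc 1 n, ⁅h i, F a⁆ = (-(rootPairing n a i) : ℂ) • F a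

/-- `v` is a highest weight vector of weight `λ = Σ m_i ω_i`. -/
def IsHWVector (n : ℕ) (h e : ℕ → L) (m : ℕ → ℕ) (v : V) : Prop :=
  v ≠ 0 ∧ (∀ i ∈ Finset.Icc 1 n, ⁅e i, v⁆ = 0) ∧
    ∀ i ∈ Finset.Icc 1 n, ⁅h i, v⁆ = (m i : ℂ) • v

/-- the PBW filtration `V(λ)_d = U(n⁻)_d v_λ` (with `n⁻` spanned by the `F a`) -/
def filt (n : ℕ) (F : ℕ × ℕ → L) (v : V) (d : ℕ) : Submodule ℂ V :=
  Submodule.span ℂ {w | ∃ xs : List (ℕ × ℕ), xs.length ≤ d ∧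
    (∀ a ∈ xs, ValidPair n a) ∧ w = applyList (xs.map F) v}

/-- the step below degree `d` of the PBW filtration (so `⊥` for `d = 0`) -/
def lowFilt (n : ℕ) (F : ℕ × ℕ → L) (v : V) (d : ℕ) : Submodule ℂ V :=
  if d = 0 then ⊥ else filt n F v (d - 1)

/-- the PBW filtration `U(n⁻)_d v` for a subalgebra `n⁻` -/
def filtSub (nminus : LieSubalgebra ℂ L) (v : V) (d : ℕ) : Submodule ℂ V :=
  Submodule.span ℂ {w | ∃ xs : List L, xs.length ≤ d ∧ (∀ x ∈ xs, x ∈ nminus) ∧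
    w = applyList xs v}

/-- a fixed enumeration of the coded positive roots -/
def pairList (n : ℕ) : List (ℕ × ℕ) :=
  ((List.range (n + 1)).flatMap fun i => (List.range (2 * n + 1)).map fun c => (i, c)).filter
    fun a => decide (ValidPair n a)

/-- a canonical list realizing a multi-exponent `s` -/
def canonList (n : ℕ) (s : ℕ × ℕ → ℕ) : List (ℕ × ℕ) :=
  (pairList n).flatMap fun a => List.replicate (s a) a

/-- the vector `f^s v` (computed in some fixed order of the factors) -/
def actMon (n : ℕ) (F : ℕ × ℕ → L) (v : V) (s : ℕ × ℕ → ℕ) : V :=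
  applyList ((canonList n s).map F) v

/-- the index type of the variables of `S(n⁻) = ℂ[f_α : α > 0]` -/
abbrev RootIdx (n : ℕ) := {a : ℕ × ℕ // ValidPair n a}

/-- extend a multi-exponent on the valid pairs by zero -/
def extendExp (n : ℕ) (t : RootIdx n →₀ ℕ) : ℕ × ℕ → ℕ :=
  fun a => if h : ValidPair n a then t ⟨a, h⟩ else 0

/-- the action of a polynomial `p ∈ S(n⁻)` on `v` (monomial by monomial, each
monomial acting by the corresponding product of root vectors) -/
noncomputable def actPoly (n : ℕ) (F : ℕ × ℕ → L) (v : V) (p : MvPolynomial (RootIdx n) ℂ) : V :=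
  ∑ t ∈ p.support, MvPolynomial.coeff t p • actMon n F v (extendExp n t)

/-- `rootSub n a b = some c` when `α_a - α_b` is the positive root `α_c` -/
def rootSub (n : ℕ) (a b : ℕ × ℕ) : Option (ℕ × ℕ) :=
  (pairList n).find? fun c =>
    (List.range (n + 1)).all fun l => coeffRoot n c l + coeffRoot n b l == coeffRoot n a l

/-- the operator `∂_{α_b}` on `S(n⁻)`: the derivation with `∂_{α_b} f_{α_a} = f_{α_a - α_b}`
if `α_a - α_b` is a positive root and `0` otherwise -/
noncomputable def pd (n : ℕ) (b : ℕ × ℕ) :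
    Derivation ℂ (MvPolynomial (RootIdx n) ℂ) (MvPolynomial (RootIdx n) ℂ) :=
  MvPolynomial.mkDerivation ℂ fun a =>
    match rootSub n a.1 b with
    | some c => if h : ValidPair n c then MvPolynomial.X ⟨c, h⟩ else 0
    | none => 0

/-- the generators `f_{α_{i,j}}^{m_i+⋯+m_j+1}` (`1 ≤ i ≤ j ≤ n-1`) and
`f_{α_{i,ī}}^{m_i+⋯+m_n+1}` (`1 ≤ i ≤ n`) of the space `R` -/
def genSet (n : ℕ) (m : ℕ → ℕ) : Set (MvPolynomial (RootIdx n) ℂ) :=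
  {p | (∃ (a : RootIdx n) (i j : ℕ), 1 ≤ i ∧ i ≤ j ∧ j ≤ n - 1 ∧ a.val = (i, j) ∧
          p = MvPolynomial.X a ^ ((∑ l ∈ Finset.Icc i j, m l) + 1)) ∨
       (∃ (a : RootIdx n) (i : ℕ), 1 ≤ i ∧ i ≤ n ∧ a.val = (i, 2 * n - i) ∧
          p = MvPolynomial.X a ^ ((∑ l ∈ Finset.Icc i n, m l) + 1))}

/-- the set `U(n⁺) ∘ R`: all results of applying words in the operators `∂_α` to
elements of `R` -/
def opGenSet (n : ℕ) (m : ℕ → ℕ) : Set (MvPolynomial (RootIdx n) ℂ) :=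
  {p | ∃ (ds : List (ℕ × ℕ)) (r : MvPolynomial (RootIdx n) ℂ), r ∈ genSet n m ∧
    (∀ b ∈ ds, ValidPair n b) ∧ p = ds.foldr (fun b q => pd n b q) r}

/-- the ideal `I(λ) = S(n⁻)·(U(n⁺) ∘ R)` -/
noncomputable def idealI (n : ℕ) (m : ℕ → ℕ) : Ideal (MvPolynomial (RootIdx n) ℂ) :=
  Ideal.span (opGenSet n m)

end Lie

end SpPBW

namespace SpPBW


open Finset Classical

/-- pairs (R,C) with R ⊆ [1,p], C ⊆ [1,q], |R| = |C| + δ, and the domination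
prefix condition. -/
noncomputable def Gset (p q δ : ℕ) : Finset (Finset ℕ × Finset ℕ) :=
  ((Finset.Icc 1 p).powerset ×ˢ (Finset.Icc 1 q).powerset).filter
    (fun RC => RC.1.card = RC.2.card + δ ∧
      ∀ v ∈ Finset.Icc 1 q, (RC.2 ∩ Finset.Iic v).card ≤ (RC.1 ∩ Finset.Iio v).card)

lemma mem_Gset {p q δ : ℕ} {R C : Finset ℕ} :
    (R, C) ∈ Gset p q δ ↔ R ⊆ Finset.Icc 1 p ∧ C ⊆ Finset.Icc 1 q ∧ R.card = C.card + δ ∧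
      ∀ v ∈ Finset.Icc 1 q, (C ∩ Finset.Iic v).card ≤ (R ∩ Finset.Iio v).card := by
  simp only [Gset, Finset.mem_filter, Finset.mem_product, Finset.mem_powerset]
  tauto

lemma Gset_zero (q δ : ℕ) : Gset 0 q δ = if δ = 0 then {(∅, ∅)} else ∅ := by
  ext ⟨R, C⟩
  simp only [mem_Gset]
  constructor
  · rintro ⟨hR, hC, hcard, hPC⟩
    have hR0 : R = ∅ := by
      have : R ⊆ ∅ := by simpa using hR
      simpa using this
    have hC0 : C = ∅ := by
      by_contra h
      obtain ⟨c, hc⟩ := Finset.nonempty_iff_ne_empty.2 h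
      have h1 := hPC c (hC hc)
      have : c ∈ C ∩ Finset.Iic c := by simp [hc]
      have h2 : 0 < (C ∩ Finset.Iic c).card := Finset.card_pos.2 ⟨c, this⟩
      rw [hR0] at h1
      simp only [Finset.empty_inter, Finset.card_empty, Nat.le_zero] at h1
      omega
    subst hR0; subst hC0
    simp at hcard
    simp [hcard]
  · intro h
    by_cases hδ : δ = 0 <;> simp [hδ] at h
    rcases h with ⟨h1, h2⟩
    subst h1; subst h2; subst hδ
    refine ⟨by simp, by simp, by simp, by simp⟩

lemma Gset_card_zero (q δ : ℕ) : (Gset 0 q δ).card = if δ = 0 then 1 else 0 := by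
  rw [Gset_zero]; split <;> simp

/-- stripping the top element of the C-range, case q+1 ∉ C -/
lemma Gset_filter_notmem (p q δ : ℕ) (hpq : p ≤ q) :
    (Gset p (q+1) δ).filter (fun RC => (q+1) ∉ RC.2) = Gset p q δ := by
  ext ⟨R, C⟩
  simp only [Finset.mem_filter, mem_Gset]
  constructor
  · rintro ⟨⟨hR, hC, hcard, hPC⟩, hq⟩
    refine ⟨hR, ?_, hcard, ?_⟩
    · intro c hc
      have := hC hc
      simp only [Finset.mem_Icc] at this ⊢
      rcases this with ⟨h1, h2⟩
      refine ⟨h1, ?_⟩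
      rcases Nat.lt_or_ge c (q+1) with h | h
      · omega
      · exfalso; apply hq; have : c = q + 1 := by omega
        rwa [this] at hc
    · intro v hv
      exact hPC v (by simp only [Finset.mem_Icc] at hv ⊢; omega)
  · rintro ⟨hR, hC, hcard, hPC⟩
    have hq : (q+1) ∉ C := fun h => by have := hC h; simp only [Finset.mem_Icc] at this; omega
    refine ⟨⟨hR, hC.trans (Finset.Icc_subset_Icc_right (by omega)), hcard, ?_⟩, hq⟩
    intro v hv
    simp only [Finset.mem_Icc] at hv
    rcases Nat.lt_or_ge v (q+1) with h | h
    · exact hPC v (by simp only [Finset.mem_Icc]; omega)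
    · have hveq : v = q + 1 := by omega
      subst hveq
      have h1 : C ∩ Finset.Iic (q+1) = C := by
        apply Finset.inter_eq_left.2
        intro c hc; have := hC hc; simp only [Finset.mem_Icc] at this; simp; omega
      have h2 : R ∩ Finset.Iio (q+1) = R := by
        apply Finset.inter_eq_left.2
        intro r hr; have := hR hr; simp only [Finset.mem_Icc] at this; simp; omega
      rw [h1, h2]; omega

/-- stripping the top element of the C-range, case q+1 ∈ C -/
lemma Gset_filter_mem_card (p q δ : ℕ) (hpq : p ≤ q) :
    ((Gset p (q+1) δ).filter (fun RC => (q+1) ∈ RC.2)).card = (Gset p q (δ+1)).card := by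
  apply Finset.card_nbij' (i := fun RC => (RC.1, RC.2.erase (q+1)))
    (j := fun RC => (RC.1, insert (q+1) RC.2))
  · rintro ⟨R, C⟩ ha
    dsimp only
    simp only [Finset.mem_coe, Finset.mem_filter, mem_Gset] at ha
    obtain ⟨⟨hR, hC, hcard, hPC⟩, hq⟩ := ha
    rw [Finset.mem_coe, mem_Gset]
    refine ⟨hR, ?_, ?_, ?_⟩
    · intro c hc
      rw [Finset.mem_erase] at hc
      have := hC hc.2
      simp only [Finset.mem_Icc] at this ⊢
      omega
    · rw [Finset.card_erase_of_mem hq]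
      have : 0 < C.card := Finset.card_pos.2 ⟨_, hq⟩
      omega
    · intro v hv
      simp only [Finset.mem_Icc] at hv
      have hE : C.erase (q+1) ∩ Finset.Iic v = C ∩ Finset.Iic v := by
        ext c
        simp only [Finset.mem_inter, Finset.mem_erase, Finset.mem_Iic]
        constructor
        · rintro ⟨⟨_, h⟩, h2⟩; exact ⟨h, h2⟩
        · rintro ⟨h, h2⟩; exact ⟨⟨by omega, h⟩, h2⟩
      rw [hE]
      exact hPC v (by simp only [Finset.mem_Icc]; omega)
  · rintro ⟨R, C⟩ ha
    dsimp only
    rw [Finset.mem_coe, mem_Gset] at ha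
    obtain ⟨hR, hC, hcard, hPC⟩ := ha
    have hq : (q+1) ∉ C := fun h => by have := hC h; simp only [Finset.mem_Icc] at this; omega
    simp only [Finset.mem_coe, Finset.mem_filter, mem_Gset]
    refine ⟨⟨hR, ?_, ?_, ?_⟩, by simp⟩
    · intro c hc
      rw [Finset.mem_insert] at hc
      rcases hc with h | h
      · simp [h]
      · have := hC h; simp only [Finset.mem_Icc] at this ⊢; omega
    · rw [Finset.card_insert_of_notMem hq]; omega
    · intro v hv
      simp only [Finset.mem_Icc] at hv
      rcases Nat.lt_or_ge v (q+1) with h | h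
      · have hE : insert (q+1) C ∩ Finset.Iic v = C ∩ Finset.Iic v := by
          ext c
          simp only [Finset.mem_inter, Finset.mem_insert, Finset.mem_Iic]
          constructor
          · rintro ⟨h1 | h1, h2⟩
            · omega
            · exact ⟨h1, h2⟩
          · rintro ⟨h1, h2⟩; exact ⟨Or.inr h1, h2⟩
        rw [hE]
        exact hPC v (by simp only [Finset.mem_Icc]; omega)
      · have hveq : v = q + 1 := by omega
        subst hveq
        have h1 : insert (q+1) C ∩ Finset.Iic (q+1) = insert (q+1) C := by
          apply Finset.inter_eq_left.2
          intro c hc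
          simp only [Finset.mem_insert] at hc
          rcases hc with h | h
          · simp [h]
          · have := hC h; simp only [Finset.mem_Icc] at this; simp; omega
        have h2 : R ∩ Finset.Iio (q+1) = R := by
          apply Finset.inter_eq_left.2
          intro r hr; have := hR hr; simp only [Finset.mem_Icc] at this; simp; omega
        rw [h1, h2, Finset.card_insert_of_notMem hq]
        omega
  · rintro ⟨R, C⟩ ha
    simp only [Finset.mem_coe, Finset.mem_filter] at ha
    simp [Finset.insert_erase ha.2]
  · rintro ⟨R, C⟩ ha
    rw [Finset.mem_coe, mem_Gset] at ha
    have hq : (q+1) ∉ C := fun h => by have := ha.2.1 h; simp only [Finset.mem_Icc] at this; omega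
    simp [Finset.erase_insert hq]

lemma Gset_card_succ_q (p q δ : ℕ) (hpq : p ≤ q) :
    (Gset p (q+1) δ).card = (Gset p q δ).card + (Gset p q (δ+1)).card := by
  rw [← Finset.card_filter_add_card_filter_not
    (p := fun RC => (q+1) ∈ RC.2) (s := Gset p (q+1) δ)]
  rw [Gset_filter_mem_card p q δ hpq]
  have : (Gset p (q+1) δ).filter (fun RC => ¬ ((q+1) ∈ RC.2)) = Gset p q δ :=
    Gset_filter_notmem p q δ hpq
  rw [this]
  omega

/-- stripping the top element of the R-range, case p+1 ∉ R -/
lemma Gset_filter_notmemR (p δ : ℕ) :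
    (Gset (p+1) (p+1) δ).filter (fun RC => (p+1) ∉ RC.1) = Gset p (p+1) δ := by
  ext ⟨R, C⟩
  simp only [Finset.mem_filter, mem_Gset]
  constructor
  · rintro ⟨⟨hR, hC, hcard, hPC⟩, hp⟩
    refine ⟨?_, hC, hcard, hPC⟩
    intro r hr
    have := hR hr
    simp only [Finset.mem_Icc] at this ⊢
    refine ⟨this.1, ?_⟩
    rcases Nat.lt_or_ge r (p+1) with h | h
    · omega
    · exfalso; apply hp; have : r = p + 1 := by omega
      rwa [this] at hr
  · rintro ⟨hR, hC, hcard, hPC⟩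
    have hp : (p+1) ∉ R := fun h => by
      have := hR h; simp only [Finset.mem_Icc] at this; omega
    exact ⟨⟨hR.trans (Finset.Icc_subset_Icc_right (by omega)), hC, hcard, hPC⟩, hp⟩

lemma RIio_erase (R : Finset ℕ) (p : ℕ) (hR : R ⊆ Finset.Icc 1 (p+1)) (v : ℕ) (hv : v ≤ p+1) :
    R.erase (p+1) ∩ Finset.Iio v = R ∩ Finset.Iio v := by
  ext r
  simp only [Finset.mem_inter, Finset.mem_erase, Finset.mem_Iio]
  constructor
  · rintro ⟨⟨_, h⟩, h2⟩; exact ⟨h, h2⟩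
  · rintro ⟨h, h2⟩; exact ⟨⟨by omega, h⟩, h2⟩

/-- the case p+1 ∈ R is impossible when δ = 0 -/
lemma Gset_filter_memR_zero (p : ℕ) :
    (Gset (p+1) (p+1) 0).filter (fun RC => (p+1) ∈ RC.1) = ∅ := by
  rw [Finset.eq_empty_iff_forall_notMem]
  rintro ⟨R, C⟩ hm
  simp only [Finset.mem_filter, mem_Gset] at hm
  obtain ⟨⟨hR, hC, hcard, hPC⟩, hp⟩ := hm
  have h1 := hPC (p+1) (by simp only [Finset.mem_Icc]; omega)
  have h2 : C ∩ Finset.Iic (p+1) = C := by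
    apply Finset.inter_eq_left.2
    intro c hc; have := hC hc; simp only [Finset.mem_Icc] at this; simp; omega
  have h3 : R ∩ Finset.Iio (p+1) = R.erase (p+1) := by
    ext r
    simp only [Finset.mem_inter, Finset.mem_erase, Finset.mem_Iio]
    constructor
    · rintro ⟨h, h2⟩; exact ⟨by omega, h⟩
    · rintro ⟨h, h2⟩
      have := hR h2; simp only [Finset.mem_Icc] at this
      exact ⟨h2, by omega⟩
  rw [h2, h3, Finset.card_erase_of_mem hp] at h1
  have : 0 < R.card := Finset.card_pos.2 ⟨_, hp⟩
  omega

lemma Gset_filter_memR_card (p δ : ℕ) :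
    ((Gset (p+1) (p+1) (δ+1)).filter (fun RC => (p+1) ∈ RC.1)).card =
      (Gset p (p+1) δ).card := by
  apply Finset.card_nbij' (i := fun RC => (RC.1.erase (p+1), RC.2))
    (j := fun RC => (insert (p+1) RC.1, RC.2))
  · rintro ⟨R, C⟩ ha
    dsimp only
    simp only [Finset.mem_coe, Finset.mem_filter, mem_Gset] at ha
    obtain ⟨⟨hR, hC, hcard, hPC⟩, hp⟩ := ha
    rw [Finset.mem_coe, mem_Gset]
    refine ⟨?_, hC, ?_, ?_⟩
    · intro r hr
      rw [Finset.mem_erase] at hr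
      have := hR hr.2
      simp only [Finset.mem_Icc] at this ⊢
      omega
    · rw [Finset.card_erase_of_mem hp]
      have : 0 < R.card := Finset.card_pos.2 ⟨_, hp⟩
      omega
    · intro v hv
      simp only [Finset.mem_Icc] at hv
      rw [RIio_erase R p hR v (by omega)]
      exact hPC v (by simp only [Finset.mem_Icc]; omega)
  · rintro ⟨R, C⟩ ha
    dsimp only
    rw [Finset.mem_coe, mem_Gset] at ha
    obtain ⟨hR, hC, hcard, hPC⟩ := ha
    have hp : (p+1) ∉ R := fun h => by
      have := hR h; simp only [Finset.mem_Icc] at this; omega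
    simp only [Finset.mem_coe, Finset.mem_filter, mem_Gset]
    refine ⟨⟨?_, hC, ?_, ?_⟩, by simp⟩
    · intro r hr
      rw [Finset.mem_insert] at hr
      rcases hr with h | h
      · simp [h]
      · have := hR h; simp only [Finset.mem_Icc] at this ⊢; omega
    · rw [Finset.card_insert_of_notMem hp]; omega
    · intro v hv
      refine le_trans (hPC v hv) (Finset.card_le_card ?_)
      exact Finset.inter_subset_inter (Finset.subset_insert _ _) (le_refl _)
  · rintro ⟨R, C⟩ ha
    simp only [Finset.mem_coe, Finset.mem_filter] at ha
    simp [Finset.insert_erase ha.2]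
  · rintro ⟨R, C⟩ ha
    rw [Finset.mem_coe, mem_Gset] at ha
    have hp : (p+1) ∉ R := fun h => by
      have := ha.1 h; simp only [Finset.mem_Icc] at this; omega
    simp [Finset.erase_insert hp]

lemma Gset_card_succ_p_zero (p : ℕ) :
    (Gset (p+1) (p+1) 0).card = (Gset p (p+1) 0).card := by
  rw [← Finset.card_filter_add_card_filter_not
    (p := fun RC => (p+1) ∈ RC.1) (s := Gset (p+1) (p+1) 0)]
  rw [Gset_filter_memR_zero]
  have : (Gset (p+1) (p+1) 0).filter (fun RC => ¬ ((p+1) ∈ RC.1)) = Gset p (p+1) 0 :=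
    Gset_filter_notmemR p 0
  rw [this]
  simp

lemma Gset_card_succ_p (p δ : ℕ) :
    (Gset (p+1) (p+1) (δ+1)).card = (Gset p (p+1) (δ+1)).card + (Gset p (p+1) δ).card := by
  rw [← Finset.card_filter_add_card_filter_not
    (p := fun RC => (p+1) ∈ RC.1) (s := Gset (p+1) (p+1) (δ+1))]
  rw [Gset_filter_memR_card]
  have : (Gset (p+1) (p+1) (δ+1)).filter (fun RC => ¬ ((p+1) ∈ RC.1)) = Gset p (p+1) (δ+1) :=
    Gset_filter_notmemR p (δ+1)
  rw [this]
  omega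

lemma Gf_base (q δ : ℕ) :
    (Gset 0 q δ).card + (if δ < 0 then (0 + q).choose (0 - δ - 1) else 0) =
      if δ ≤ 0 then (0 + q).choose (0 - δ) else 0 := by
  rw [Gset_card_zero]
  rcases δ with _ | δ <;> simp

lemma pascal (M k : ℕ) : (M+1).choose (k+1) = M.choose k + M.choose (k+1) :=
  Nat.choose_succ_succ' M k

lemma Gset_card_formula (N : ℕ) : ∀ p q δ : ℕ, p + q ≤ N → p ≤ q →
    (Gset p q δ).card + (if δ < p then (p + q).choose (p - δ - 1) else 0) =
      if δ ≤ p then (p + q).choose (p - δ) else 0 := by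
  induction N with
  | zero =>
    intro p q δ h1 h2
    have hp : p = 0 := by omega
    subst hp
    exact Gf_base q δ
  | succ N IH =>
    intro p q δ hN hpq
    rcases Nat.eq_zero_or_pos p with hp | hp
    · subst hp; exact Gf_base q δ
    obtain ⟨p', rfl⟩ : ∃ p', p = p' + 1 := ⟨p - 1, by omega⟩
    rcases eq_or_lt_of_le hpq with hq | hq
    · -- q = p' + 1
      subst hq
      have hIH0 := IH p' (p'+1) δ (by omega) (by omega)
      rw [show p' + 1 + (p' + 1) = p' + (p' + 1) + 1 by omega]
      set M := p' + (p' + 1) with hM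
      have hSym : M.choose (p' + 1) = M.choose p' := by
        have h1 := Nat.choose_symm (n := M) (k := p' + 1) (by omega)
        rw [show M - (p' + 1) = p' by omega] at h1
        omega
      rcases δ with _ | δ'
      · -- δ = 0
        rw [Gset_card_succ_p_zero p']
        rw [if_pos (by omega : (0:ℕ) < p'+1), if_pos (by omega : (0:ℕ) ≤ p'+1),
          show p' + 1 - 0 - 1 = p' by omega, show p' + 1 - 0 = p' + 1 by omega]
        rw [if_pos (by omega : (0:ℕ) ≤ p'), show p' - 0 = p' by omega] at hIH0
        have A := pascal M p'
        rcases Nat.eq_zero_or_pos p' with hp' | hp'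
        · subst hp'
          rw [if_neg (by omega : ¬ ((0:ℕ) < 0))] at hIH0
          rw [Nat.choose_zero_right] at hIH0 ⊢
          have B : (M+1).choose (0+1) = M+1 := by
            rw [show (0:ℕ)+1 = 1 from rfl, Nat.choose_one_right]
          omega
        · rw [if_pos hp'] at hIH0
          obtain ⟨k, rfl⟩ : ∃ k, p' = k + 1 := ⟨p' - 1, by omega⟩
          rw [show k + 1 - 1 = k by omega] at hIH0
          have B := pascal M k
          omega
      · -- δ = δ' + 1
        rw [Gset_card_succ_p p' δ']
        have hIH1 := IH p' (p'+1) δ' (by omega) (by omega)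
        rw [← hM] at hIH1
        rcases Nat.lt_or_ge (δ' + 1) p' with hd | hd
        · -- δ' + 1 < p'
          obtain ⟨k, hk⟩ : ∃ k, p' = δ' + 1 + (k + 1) := ⟨p' - δ' - 2, by omega⟩
          rw [if_pos (by omega : δ'+1 < p'), if_pos (by omega : δ'+1 ≤ p'),
            show p' - (δ'+1) - 1 = k by omega, show p' - (δ'+1) = k + 1 by omega] at hIH0
          rw [if_pos (by omega : δ' < p'), if_pos (by omega : δ' ≤ p'),
            show p' - δ' - 1 = k + 1 by omega, show p' - δ' = k + 1 + 1 by omega] at hIH1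
          rw [if_pos (by omega : δ'+1 < p'+1), if_pos (by omega : δ'+1 ≤ p'+1),
            show p' + 1 - (δ'+1) - 1 = k + 1 by omega,
            show p' + 1 - (δ'+1) = k + 1 + 1 by omega]
          have A := pascal M k
          have B := pascal M (k+1)
          omega
        rcases Nat.eq_or_lt_of_le hd with hd2 | hd2
        · -- δ' + 1 = p'
          rw [if_neg (by omega : ¬ (δ'+1 < p')), if_pos (by omega : δ'+1 ≤ p'),
            show p' - (δ'+1) = 0 by omega] at hIH0
          rw [if_pos (by omega : δ' < p'), if_pos (by omega : δ' ≤ p'),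
            show p' - δ' - 1 = 0 by omega, show p' - δ' = 0 + 1 by omega] at hIH1
          rw [if_pos (by omega : δ'+1 < p'+1), if_pos (by omega : δ'+1 ≤ p'+1),
            show p' + 1 - (δ'+1) - 1 = 0 by omega,
            show p' + 1 - (δ'+1) = 0 + 1 by omega]
          have A := pascal M 0
          rw [Nat.choose_zero_right] at hIH0 hIH1 A ⊢
          omega
        rcases Nat.eq_or_lt_of_le (by omega : p' + 1 ≤ δ' + 1) with hd3 | hd3
        · -- δ' + 1 = p' + 1
          rw [if_neg (by omega : ¬ (δ'+1 < p')), if_neg (by omega : ¬ (δ'+1 ≤ p'))] at hIH0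
          rw [if_neg (by omega : ¬ (δ' < p')), if_pos (by omega : δ' ≤ p'),
            show p' - δ' = 0 by omega] at hIH1
          rw [if_neg (by omega : ¬ (δ'+1 < p'+1)), if_pos (by omega : δ'+1 ≤ p'+1),
            show p' + 1 - (δ'+1) = 0 by omega]
          rw [Nat.choose_zero_right] at hIH1 ⊢
          omega
        · -- δ' + 1 > p' + 1
          rw [if_neg (by omega : ¬ (δ'+1 < p')), if_neg (by omega : ¬ (δ'+1 ≤ p'))] at hIH0
          rw [if_neg (by omega : ¬ (δ' < p')), if_neg (by omega : ¬ (δ' ≤ p'))] at hIH1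
          rw [if_neg (by omega : ¬ (δ'+1 < p'+1)), if_neg (by omega : ¬ (δ'+1 ≤ p'+1))]
          omega
    · -- p' + 1 < q
      obtain ⟨q', rfl⟩ : ∃ q', q = q' + 1 := ⟨q - 1, by omega⟩
      have hpq' : p' + 1 ≤ q' := by omega
      rw [Gset_card_succ_q (p'+1) q' δ hpq']
      have hIH0 := IH (p'+1) q' δ (by omega) (by omega)
      have hIH1 := IH (p'+1) q' (δ+1) (by omega) (by omega)
      rw [show p' + 1 + (q' + 1) = p' + 1 + q' + 1 by omega]
      set M := p' + 1 + q' with hM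
      rcases Nat.lt_or_ge δ p' with hd | hd
      · -- δ < p'
        obtain ⟨k, hk⟩ : ∃ k, p' = δ + (k + 1) := ⟨p' - δ - 1, by omega⟩
        rw [if_pos (by omega : δ < p'+1), if_pos (by omega : δ ≤ p'+1),
          show p' + 1 - δ - 1 = k + 1 by omega, show p' + 1 - δ = k + 1 + 1 by omega] at hIH0 ⊢
        rw [if_pos (by omega : δ+1 < p'+1), if_pos (by omega : δ+1 ≤ p'+1),
          show p' + 1 - (δ+1) - 1 = k by omega, show p' + 1 - (δ+1) = k + 1 by omega] at hIH1
        have A := pascal M k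
        have B := pascal M (k+1)
        omega
      rcases Nat.eq_or_lt_of_le hd with hd2 | hd2
      · -- δ = p'
        rw [if_pos (by omega : δ < p'+1), if_pos (by omega : δ ≤ p'+1),
          show p' + 1 - δ - 1 = 0 by omega, show p' + 1 - δ = 0 + 1 by omega] at hIH0 ⊢
        rw [if_neg (by omega : ¬ (δ+1 < p'+1)), if_pos (by omega : δ+1 ≤ p'+1),
          show p' + 1 - (δ+1) = 0 by omega] at hIH1
        have A := pascal M 0
        rw [Nat.choose_zero_right] at hIH0 hIH1 A ⊢
        omega
      rcases Nat.eq_or_lt_of_le (by omega : p' + 1 ≤ δ) with hd3 | hd3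
      · -- δ = p' + 1
        rw [if_neg (by omega : ¬ (δ < p'+1)), if_pos (by omega : δ ≤ p'+1),
          show p' + 1 - δ = 0 by omega] at hIH0 ⊢
        rw [if_neg (by omega : ¬ (δ+1 < p'+1)), if_neg (by omega : ¬ (δ+1 ≤ p'+1))] at hIH1
        rw [Nat.choose_zero_right] at hIH0 ⊢
        omega
      · -- δ > p' + 1
        rw [if_neg (by omega : ¬ (δ < p'+1)), if_neg (by omega : ¬ (δ ≤ p'+1))] at hIH0 ⊢
        rw [if_neg (by omega : ¬ (δ+1 < p'+1)), if_neg (by omega : ¬ (δ+1 ≤ p'+1))] at hIH1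
        omega

/-! ### rank machinery -/

lemma rank_mono {S : Finset ℕ} {x y : ℕ} (hxy : x ≤ y) :
    (S ∩ Finset.Iio x).card ≤ (S ∩ Finset.Iio y).card := by
  apply Finset.card_le_card
  exact Finset.inter_subset_inter (le_refl _) (Finset.Iio_subset_Iio hxy)

lemma rank_strict {S : Finset ℕ} {x y : ℕ} (hx : x ∈ S) (hxy : x < y) :
    (S ∩ Finset.Iio x).card < (S ∩ Finset.Iio y).card := by
  apply Finset.card_lt_card
  constructor
  · exact Finset.inter_subset_inter (le_refl _) (Finset.Iio_subset_Iio (by omega))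
  · intro hsub
    have h2 := hsub (Finset.mem_inter.2 ⟨hx, Finset.mem_Iio.2 hxy⟩)
    rw [Finset.mem_inter, Finset.mem_Iio] at h2
    omega

lemma rank_injOn {S : Finset ℕ} {x y : ℕ} (hx : x ∈ S) (hy : y ∈ S)
    (h : (S ∩ Finset.Iio x).card = (S ∩ Finset.Iio y).card) : x = y := by
  rcases lt_trichotomy x y with hlt | heq | hlt
  · have := rank_strict hx hlt; omega
  · exact heq
  · have := rank_strict hy hlt; omega

lemma rank_lt_card {S : Finset ℕ} {x : ℕ} (hx : x ∈ S) :
    (S ∩ Finset.Iio x).card < S.card := by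
  apply Finset.card_lt_card
  constructor
  · exact Finset.inter_subset_left
  · intro hsub
    have h2 := hsub hx
    rw [Finset.mem_inter, Finset.mem_Iio] at h2
    omega

lemma rank_surj (S : Finset ℕ) {k : ℕ} (hk : k < S.card) :
    ∃ x ∈ S, (S ∩ Finset.Iio x).card = k := by
  have himg : S.image (fun x => (S ∩ Finset.Iio x).card) = Finset.range S.card := by
    apply Finset.eq_of_subset_of_card_le
    · intro j hj
      simp only [Finset.mem_image] at hj
      obtain ⟨x, hx, rfl⟩ := hj
      simpa using rank_lt_card hx
    · rw [Finset.card_range, Finset.card_image_of_injOn]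
      intro x hx y hy h
      exact rank_injOn hx hy h
  have : k ∈ S.image (fun x => (S ∩ Finset.Iio x).card) := by
    rw [himg]; simpa using hk
  simpa using this

/-! ### the Good predicate and the bijection with Gset -/

/-- `s` is the indicator of an antichain of roots in the `t`-window. -/
def Good (n t : ℕ) (s : ℕ × ℕ → ℕ) : Prop :=
  (∀ a, s a ≠ 0 → (ValidPair n a ∧ a.1 ≤ t ∧ t ≤ a.2) ∧ s a = 1) ∧
  (∀ a b, s a ≠ 0 → s b ≠ 0 → a.1 ≤ b.1 → a.2 ≤ b.2 → a = b)

def suppF (n : ℕ) (s : ℕ × ℕ → ℕ) : Finset (ℕ × ℕ) :=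
  (validFinset n).filter (fun a => s a ≠ 0)

lemma mem_validFinset {n : ℕ} {a : ℕ × ℕ} : a ∈ validFinset n ↔ ValidPair n a := by
  unfold validFinset
  simp only [Finset.mem_filter, Finset.mem_product, Finset.mem_Icc]
  constructor
  · tauto
  · intro h
    obtain ⟨h1, h2, h3⟩ := h
    refine ⟨⟨⟨h1, ?_⟩, ?_, ?_⟩, h1, h2, h3⟩ <;> omega

lemma mem_suppF {n : ℕ} {s : ℕ × ℕ → ℕ} (hs : Good n t s) {a : ℕ × ℕ} :
    a ∈ suppF n s ↔ s a ≠ 0 := by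
  unfold suppF
  rw [Finset.mem_filter, mem_validFinset]
  exact ⟨fun h => h.2, fun h => ⟨(hs.1 a h).1.1, h⟩⟩

/-- `2n+1 - a.2`, the reflected column coordinate -/
def crefl (n : ℕ) (a : ℕ × ℕ) : ℕ := 2 * n + 1 - a.2

variable {n t : ℕ}

lemma good_valid {s : ℕ × ℕ → ℕ} (hs : Good n t s) {a : ℕ × ℕ} (ha : s a ≠ 0) :
    1 ≤ a.1 ∧ a.1 ≤ a.2 ∧ a.1 + a.2 ≤ 2 * n ∧ a.1 ≤ t ∧ t ≤ a.2 := by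
  obtain ⟨⟨⟨h1, h2, h3⟩, h4, h5⟩, _⟩ := hs.1 a ha
  omega

lemma good_fst_injOn {s : ℕ × ℕ → ℕ} (hs : Good n t s) {a b : ℕ × ℕ}
    (ha : s a ≠ 0) (hb : s b ≠ 0) (h : a.1 = b.1) : a = b := by
  rcases Nat.le_total a.2 b.2 with h2 | h2
  · exact hs.2 a b ha hb (by omega) h2
  · exact (hs.2 b a hb ha (by omega) h2).symm

lemma good_snd_injOn {s : ℕ × ℕ → ℕ} (hs : Good n t s) {a b : ℕ × ℕ}
    (ha : s a ≠ 0) (hb : s b ≠ 0) (h : a.2 = b.2) : a = b := by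
  rcases Nat.le_total a.1 b.1 with h2 | h2
  · exact hs.2 a b ha hb h2 (by omega)
  · exact (hs.2 b a hb ha h2 (by omega)).symm

lemma good_anti {s : ℕ × ℕ → ℕ} (hs : Good n t s) {a b : ℕ × ℕ}
    (ha : s a ≠ 0) (hb : s b ≠ 0) (h : a.1 < b.1) : b.2 < a.2 := by
  rcases Nat.lt_or_ge b.2 a.2 with h2 | h2
  · exact h2
  · have := hs.2 a b ha hb (by omega) h2
    subst this
    omega

lemma good_anti_iff {s : ℕ × ℕ → ℕ} (hs : Good n t s) {a b : ℕ × ℕ}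
    (ha : s a ≠ 0) (hb : s b ≠ 0) : a.1 < b.1 ↔ b.2 < a.2 := by
  constructor
  · exact good_anti hs ha hb
  · intro h2
    rcases Nat.lt_trichotomy a.1 b.1 with h | h | h
    · exact h
    · have := good_fst_injOn hs ha hb h; subst this; omega
    · have := good_anti hs hb ha h; omega

def Rof (n : ℕ) (s : ℕ × ℕ → ℕ) : Finset ℕ := (suppF n s).image Prod.fst
def Cof (n : ℕ) (s : ℕ × ℕ → ℕ) : Finset ℕ := (suppF n s).image (crefl n)

lemma card_Rof {s : ℕ × ℕ → ℕ} (hs : Good n t s) : (Rof n s).card = (suppF n s).card := by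
  apply Finset.card_image_of_injOn
  intro a ha b hb h
  rw [Finset.mem_coe, mem_suppF hs] at ha hb
  exact good_fst_injOn hs ha hb h

lemma card_Cof {s : ℕ × ℕ → ℕ} (hs : Good n t s) : (Cof n s).card = (suppF n s).card := by
  apply Finset.card_image_of_injOn
  intro a ha b hb h
  rw [Finset.mem_coe, mem_suppF hs] at ha hb
  have ha2 := good_valid hs ha
  have hb2 := good_valid hs hb
  exact good_snd_injOn hs ha hb (by unfold crefl at h; omega)

lemma Rof_inter {s : ℕ × ℕ → ℕ} (hs : Good n t s) (v : ℕ) :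
    Rof n s ∩ Finset.Iio v = ((suppF n s).filter (fun b => b.1 < v)).image Prod.fst := by
  ext x
  simp only [Rof, Finset.mem_inter, Finset.mem_image, Finset.mem_filter, Finset.mem_Iio]
  constructor
  · rintro ⟨⟨a, ha, rfl⟩, h2⟩
    exact ⟨a, ⟨ha, h2⟩, rfl⟩
  · rintro ⟨a, ⟨ha, h2⟩, rfl⟩
    exact ⟨⟨a, ha, rfl⟩, h2⟩

lemma Cof_inter {s : ℕ × ℕ → ℕ} (hs : Good n t s) (v : ℕ) :
    Cof n s ∩ Finset.Iic v = ((suppF n s).filter (fun b => crefl n b ≤ v)).image (crefl n) := by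
  ext x
  simp only [Cof, Finset.mem_inter, Finset.mem_image, Finset.mem_filter, Finset.mem_Iic]
  constructor
  · rintro ⟨⟨a, ha, rfl⟩, h2⟩
    exact ⟨a, ⟨ha, h2⟩, rfl⟩
  · rintro ⟨a, ⟨ha, h2⟩, rfl⟩
    exact ⟨⟨a, ha, rfl⟩, h2⟩

lemma Cof_interIio {s : ℕ × ℕ → ℕ} (hs : Good n t s) (v : ℕ) :
    Cof n s ∩ Finset.Iio v = ((suppF n s).filter (fun b => crefl n b < v)).image (crefl n) := by
  ext x
  simp only [Cof, Finset.mem_inter, Finset.mem_image, Finset.mem_filter, Finset.mem_Iio]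
  constructor
  · rintro ⟨⟨a, ha, rfl⟩, h2⟩
    exact ⟨a, ⟨ha, h2⟩, rfl⟩
  · rintro ⟨a, ⟨ha, h2⟩, rfl⟩
    exact ⟨⟨a, ha, rfl⟩, h2⟩

lemma forward_mem_Gset (ht1 : 1 ≤ t) (htn : t ≤ n) {s : ℕ × ℕ → ℕ} (hs : Good n t s) :
    (Rof n s, Cof n s) ∈ Gset t (2 * n + 1 - t) 0 := by
  rw [mem_Gset]
  refine ⟨?_, ?_, ?_, ?_⟩
  · intro x hx
    simp only [Rof, Finset.mem_image] at hx
    obtain ⟨a, ha, rfl⟩ := hx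
    rw [mem_suppF hs] at ha
    have := good_valid hs ha
    simp only [Finset.mem_Icc]
    omega
  · intro x hx
    simp only [Cof, Finset.mem_image] at hx
    obtain ⟨a, ha, rfl⟩ := hx
    rw [mem_suppF hs] at ha
    have := good_valid hs ha
    simp only [Finset.mem_Icc]
    unfold crefl
    omega
  · rw [card_Rof hs, card_Cof hs, Nat.add_zero]
  · intro v _
    rw [Cof_inter hs, Rof_inter hs]
    have h1 : (((suppF n s).filter (fun b => crefl n b ≤ v)).image (crefl n)).card
        = ((suppF n s).filter (fun b => crefl n b ≤ v)).card := by
      apply Finset.card_image_of_injOn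
      intro a ha b hb h
      rw [Finset.mem_coe, Finset.mem_filter, mem_suppF hs] at ha hb
      have ha2 := good_valid hs ha.1
      have hb2 := good_valid hs hb.1
      exact good_snd_injOn hs ha.1 hb.1 (by unfold crefl at h; omega)
    rw [h1]
    apply Finset.card_le_card_of_injOn Prod.fst
    · intro a ha
      rw [Finset.mem_coe, Finset.mem_filter, mem_suppF hs] at ha
      obtain ⟨ha1, ha2⟩ := ha
      have h3 := good_valid hs ha1
      simp only [Finset.mem_coe, Finset.mem_image, Finset.mem_filter]
      refine ⟨a, ⟨by rwa [mem_suppF hs], ?_⟩, rfl⟩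
      unfold crefl at ha2
      omega
    · intro a ha b hb h
      rw [Finset.mem_coe, Finset.mem_filter, mem_suppF hs] at ha hb
      exact good_fst_injOn hs ha.1 hb.1 h


/-! ### the inverse map: from a dominating pair to an antichain -/

def zipA (n : ℕ) (R C : Finset ℕ) : Finset (ℕ × ℕ) :=
  ((Finset.Icc 1 n) ×ˢ (Finset.Icc 1 (2*n))).filter
    (fun a => a.1 ∈ R ∧ crefl n a ∈ C ∧
      (R ∩ Finset.Iio a.1).card = (C ∩ Finset.Iio (crefl n a)).card)

lemma mem_zipA {R C : Finset ℕ} {a : ℕ × ℕ} :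
    a ∈ zipA n R C ↔ (1 ≤ a.1 ∧ a.1 ≤ n ∧ 1 ≤ a.2 ∧ a.2 ≤ 2*n) ∧ a.1 ∈ R ∧ crefl n a ∈ C ∧
      (R ∩ Finset.Iio a.1).card = (C ∩ Finset.Iio (crefl n a)).card := by
  unfold zipA
  simp only [Finset.mem_filter, Finset.mem_product, Finset.mem_Icc]
  tauto

section Backward

variable {R C : Finset ℕ} (ht1 : 1 ≤ t) (htn : t ≤ n)
  (hRC : (R, C) ∈ Gset t (2 * n + 1 - t) 0)

include hRC in
lemma gset_dom {r c : ℕ} (hr : r ∈ R) (hc : c ∈ C)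
    (h : (R ∩ Finset.Iio r).card = (C ∩ Finset.Iio c).card) : r < c := by
  rw [mem_Gset] at hRC
  obtain ⟨hRs, hCs, hcard, hPC⟩ := hRC
  have hcm := hCs hc
  rw [Finset.mem_Icc] at hcm
  have hPCc := hPC c (by rw [Finset.mem_Icc]; omega)
  have hins : C ∩ Finset.Iic c = insert c (C ∩ Finset.Iio c) := by
    ext x
    simp only [Finset.mem_inter, Finset.mem_insert, Finset.mem_Iic, Finset.mem_Iio]
    constructor
    · rintro ⟨h1, h2⟩
      rcases Nat.lt_or_ge x c with h3 | h3
      · exact Or.inr ⟨h1, h3⟩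
      · exact Or.inl (by omega)
    · rintro (rfl | ⟨h1, h2⟩)
      · exact ⟨hc, le_refl _⟩
      · exact ⟨h1, by omega⟩
  rw [hins, Finset.card_insert_of_notMem (by simp)] at hPCc
  by_contra hge
  have := rank_mono (S := R) (x := c) (y := r) (by omega)
  omega

include ht1 htn hRC in
lemma zipA_valid {a : ℕ × ℕ} (ha : a ∈ zipA n R C) :
    ValidPair n a ∧ a.1 ≤ t ∧ t ≤ a.2 := by
  rw [mem_zipA] at ha
  obtain ⟨⟨h1, h2, h3, h4⟩, hr, hc, hrank⟩ := ha
  have hRC' := hRC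
  rw [mem_Gset] at hRC
  obtain ⟨hRs, hCs, _, _⟩ := hRC
  have hrt := hRs hr
  have hct := hCs hc
  rw [Finset.mem_Icc] at hrt hct
  have hdom := gset_dom hRC' hr hc hrank
  unfold crefl at hct hdom
  unfold ValidPair
  omega

include hRC in
lemma zipA_antichain {a b : ℕ × ℕ} (ha : a ∈ zipA n R C) (hb : b ∈ zipA n R C)
    (h1 : a.1 ≤ b.1) (h2 : a.2 ≤ b.2) : a = b := by
  rw [mem_zipA] at ha hb
  obtain ⟨⟨ha1, ha2, ha3, ha4⟩, har, hac, harank⟩ := ha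
  obtain ⟨⟨hb1, hb2, hb3, hb4⟩, hbr, hbc, hbrank⟩ := hb
  have hcc : crefl n b ≤ crefl n a := by unfold crefl; omega
  rcases Nat.eq_or_lt_of_le h1 with heq | hlt
  · have : (C ∩ Finset.Iio (crefl n a)).card = (C ∩ Finset.Iio (crefl n b)).card := by
      rw [← harank, ← hbrank, heq]
    have hc2 := rank_injOn hac hbc this
    have : a.2 = b.2 := by unfold crefl at hc2; omega
    exact Prod.ext heq this
  · exfalso
    have hs := rank_strict har hlt
    have hm := rank_mono (S := C) hcc
    omega

include ht1 htn hRC in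
lemma zipA_image_fst : (zipA n R C).image Prod.fst = R := by
  rw [mem_Gset] at hRC
  obtain ⟨hRs, hCs, hcard, hPC⟩ := hRC
  rw [Nat.add_zero] at hcard
  apply Finset.Subset.antisymm
  · intro x hx
    simp only [Finset.mem_image] at hx
    obtain ⟨a, ha, rfl⟩ := hx
    exact (mem_zipA.1 ha).2.1
  · intro r hr
    have hrt := hRs hr
    rw [Finset.mem_Icc] at hrt
    have hk : (R ∩ Finset.Iio r).card < C.card := by
      rw [← hcard]; exact rank_lt_card hr
    obtain ⟨c, hc, hrank⟩ := rank_surj C hk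
    have hct := hCs hc
    rw [Finset.mem_Icc] at hct
    simp only [Finset.mem_image]
    refine ⟨(r, 2*n+1-c), ?_, rfl⟩
    rw [mem_zipA]
    have hcre : crefl n (r, 2*n+1-c) = c := by
      show 2*n+1 - (2*n+1-c) = c
      omega
    rw [hcre]
    exact ⟨⟨by omega, by omega, by omega, by omega⟩, hr, hc, hrank.symm⟩

include ht1 htn hRC in
lemma zipA_image_crefl : (zipA n R C).image (crefl n) = C := by
  rw [mem_Gset] at hRC
  obtain ⟨hRs, hCs, hcard, hPC⟩ := hRC
  rw [Nat.add_zero] at hcard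
  apply Finset.Subset.antisymm
  · intro x hx
    simp only [Finset.mem_image] at hx
    obtain ⟨a, ha, rfl⟩ := hx
    exact (mem_zipA.1 ha).2.2.1
  · intro c hc
    have hct := hCs hc
    rw [Finset.mem_Icc] at hct
    have hk : (C ∩ Finset.Iio c).card < R.card := by
      rw [hcard]; exact rank_lt_card hc
    obtain ⟨r, hr, hrank⟩ := rank_surj R hk
    have hrt := hRs hr
    rw [Finset.mem_Icc] at hrt
    simp only [Finset.mem_image]
    have hcre : crefl n (r, 2*n+1-c) = c := by
      show 2*n+1 - (2*n+1-c) = c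
      omega
    refine ⟨(r, 2*n+1-c), ?_, hcre⟩
    rw [mem_zipA, hcre]
    exact ⟨⟨by omega, by omega, by omega, by omega⟩, hr, hc, hrank⟩

open Classical in
/-- the indicator multi-exponent of a finite set of pairs -/
noncomputable def sOf (A : Finset (ℕ × ℕ)) : ℕ × ℕ → ℕ := fun a => if a ∈ A then 1 else 0

lemma sOf_ne_zero {A : Finset (ℕ × ℕ)} {a : ℕ × ℕ} : sOf A a ≠ 0 ↔ a ∈ A := by
  unfold sOf
  split <;> simp_all

include ht1 htn hRC in
lemma good_sOf : Good n t (sOf (zipA n R C)) := by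
  constructor
  · intro a ha
    rw [sOf_ne_zero] at ha
    refine ⟨zipA_valid ht1 htn hRC ha, ?_⟩
    unfold sOf
    simp [ha]
  · intro a b ha hb h1 h2
    rw [sOf_ne_zero] at ha hb
    exact zipA_antichain hRC ha hb h1 h2

end Backward

/-! ### round trips -/

lemma rank_eq_supp {s : ℕ × ℕ → ℕ} (hs : Good n t s) {a : ℕ × ℕ} (ha : s a ≠ 0) :
    (Rof n s ∩ Finset.Iio a.1).card = (Cof n s ∩ Finset.Iio (crefl n a)).card := by
  rw [Rof_inter hs, Cof_interIio hs]
  have hfe : (suppF n s).filter (fun b => b.1 < a.1)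
      = (suppF n s).filter (fun b => crefl n b < crefl n a) := by
    ext b
    rw [Finset.mem_filter, Finset.mem_filter, mem_suppF hs]
    constructor
    · rintro ⟨hb, h2⟩
      refine ⟨hb, ?_⟩
      have := (good_anti_iff hs hb ha).1 h2
      have hb2 := good_valid hs hb
      have ha2 := good_valid hs ha
      unfold crefl
      omega
    · rintro ⟨hb, h2⟩
      refine ⟨hb, ?_⟩
      have hb2 := good_valid hs hb
      have ha2 := good_valid hs ha
      have : a.2 < b.2 := by unfold crefl at h2; omega
      exact (good_anti_iff hs hb ha).2 this
  rw [hfe]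
  rw [Finset.card_image_of_injOn, Finset.card_image_of_injOn]
  · intro x hx y hy h
    rw [Finset.mem_coe, Finset.mem_filter, mem_suppF hs] at hx hy
    have hx2 := good_valid hs hx.1
    have hy2 := good_valid hs hy.1
    exact good_snd_injOn hs hx.1 hy.1 (by unfold crefl at h; omega)
  · intro x hx y hy h
    rw [Finset.mem_coe, Finset.mem_filter, mem_suppF hs] at hx hy
    exact good_fst_injOn hs hx.1 hy.1 h

lemma zipA_roundtrip (ht1 : 1 ≤ t) (htn : t ≤ n) {s : ℕ × ℕ → ℕ} (hs : Good n t s) :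
    zipA n (Rof n s) (Cof n s) = suppF n s := by
  ext x
  rw [mem_zipA, mem_suppF hs]
  constructor
  · rintro ⟨⟨h1, h2, h3, h4⟩, hr, hc, hrank⟩
    simp only [Rof, Finset.mem_image] at hr
    obtain ⟨a, ha, hafst⟩ := hr
    rw [mem_suppF hs] at ha
    simp only [Cof, Finset.mem_image] at hc
    obtain ⟨b, hb, hbsnd⟩ := hc
    rw [mem_suppF hs] at hb
    have hra := rank_eq_supp hs ha
    have hab : a = b := by
      have h5 : (Cof n s ∩ Finset.Iio (crefl n a)).card
          = (Cof n s ∩ Finset.Iio (crefl n b)).card := by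
        rw [← hra, hafst, hbsnd, hrank]
      have h6 : crefl n a ∈ Cof n s := by
        simp only [Cof, Finset.mem_image]
        exact ⟨a, (mem_suppF hs).2 ha, rfl⟩
      have h7 : crefl n b ∈ Cof n s := by
        simp only [Cof, Finset.mem_image]
        exact ⟨b, (mem_suppF hs).2 hb, rfl⟩
      have h8 := rank_injOn h6 h7 h5
      have ha2 := good_valid hs ha
      have hb2 := good_valid hs hb
      exact good_snd_injOn hs ha hb (by unfold crefl at h8; omega)
    subst hab
    have ha2 := good_valid hs ha
    have : x = a := by
      have : x.2 = a.2 := by unfold crefl at hbsnd; omega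
      exact Prod.ext hafst.symm this
    rwa [this]
  · intro hx
    have hx2 := good_valid hs hx
    refine ⟨⟨by omega, by omega, by omega, by omega⟩, ?_, ?_, rank_eq_supp hs hx⟩
    · simp only [Rof, Finset.mem_image]
      exact ⟨x, (mem_suppF hs).2 hx, rfl⟩
    · simp only [Cof, Finset.mem_image]
      exact ⟨x, (mem_suppF hs).2 hx, rfl⟩

lemma sOf_roundtrip (ht1 : 1 ≤ t) (htn : t ≤ n) {s : ℕ × ℕ → ℕ} (hs : Good n t s) :
    sOf (zipA n (Rof n s) (Cof n s)) = s := by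
  funext a
  rw [zipA_roundtrip ht1 htn hs]
  unfold sOf
  split
  · rename_i h
    rw [mem_suppF hs] at h
    exact ((hs.1 a h).2).symm
  · rename_i h
    rw [mem_suppF hs] at h
    omega

lemma suppF_sOf {R C : Finset ℕ} (ht1 : 1 ≤ t) (htn : t ≤ n)
    (hRC : (R, C) ∈ Gset t (2 * n + 1 - t) 0) :
    suppF n (sOf (zipA n R C)) = zipA n R C := by
  ext a
  rw [mem_suppF (good_sOf ht1 htn hRC), sOf_ne_zero]

noncomputable def goodEquiv (ht1 : 1 ≤ t) (htn : t ≤ n) :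
    {s : ℕ × ℕ → ℕ // Good n t s} ≃ {RC // RC ∈ Gset t (2 * n + 1 - t) 0} where
  toFun s := ⟨(Rof n s.1, Cof n s.1), forward_mem_Gset ht1 htn s.2⟩
  invFun RC := ⟨sOf (zipA n RC.1.1 RC.1.2), by
    have := RC.2
    have h2 : ((RC.1.1, RC.1.2) : Finset ℕ × Finset ℕ) = RC.1 := rfl
    exact good_sOf ht1 htn (by rwa [h2])⟩
  left_inv s := by
    apply Subtype.ext
    exact sOf_roundtrip ht1 htn s.2
  right_inv RC := by
    apply Subtype.ext
    obtain ⟨⟨R, C⟩, hRC⟩ := RC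
    have h1 := suppF_sOf ht1 htn hRC
    simp only
    rw [Prod.ext_iff]
    constructor
    · show Rof n (sOf (zipA n R C)) = R
      unfold Rof
      rw [h1]
      exact zipA_image_fst ht1 htn hRC
    · show Cof n (sOf (zipA n R C)) = C
      unfold Cof
      rw [h1]
      exact zipA_image_crefl ht1 htn hRC

lemma ncard_good_eq (ht1 : 1 ≤ t) (htn : t ≤ n) :
    {s : ℕ × ℕ → ℕ | Good n t s}.ncard = (Gset t (2 * n + 1 - t) 0).card := by
  rw [← Nat.card_coe_set_eq, ← Nat.card_eq_finsetCard]
  exact Nat.card_congr (goodEquiv ht1 htn)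

/-! ### generic facts about maps of ranges -/

section PathInfra

variable {α : Type*}

lemma head?_map_range (f : ℕ → α) (k : ℕ) :
    ((List.range (k+1)).map f).head? = some (f 0) := by
  rw [List.range_succ_eq_map]
  simp

lemma getLast?_map_range (f : ℕ → α) (k : ℕ) :
    ((List.range (k+1)).map f).getLast? = some (f k) := by
  rw [List.range_succ, List.map_append]
  simp

lemma mem_map_range (f : ℕ → α) {k j : ℕ} (hj : j < k) : f j ∈ (List.range k).map f :=
  List.mem_map.2 ⟨j, List.mem_range.2 hj, rfl⟩

lemma exists_of_mem_map_range (f : ℕ → α) {k : ℕ} {x : α} (hx : x ∈ (List.range k).map f) :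
    ∃ j, j < k ∧ f j = x := by
  rw [List.mem_map] at hx
  obtain ⟨j, hj, rfl⟩ := hx
  exact ⟨j, List.mem_range.1 hj, rfl⟩

lemma chain'_map_range {R : α → α → Prop} (f : ℕ → α) (k : ℕ)
    (h : ∀ j, j + 1 < k → R (f j) (f (j+1))) : List.Chain' R ((List.range k).map f) := by
  rw [show List.Chain' R ((List.range k).map f) = List.IsChain R ((List.range k).map f) from rfl, List.isChain_map]
  rcases k with _ | k
  · simp
  · rw [show (k+1 : ℕ) = Nat.succ k from rfl, List.isChain_range_succ]
    intro m hm
    exact h m (by omega)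

end PathInfra

lemma mkDyck {x y : ℕ × ℕ} (h : (y.1 = x.1 ∧ y.2 = x.2 + 1) ∨ (y.1 = x.1 + 1 ∧ y.2 = x.2)) :
    DyckStep x y := by
  rcases h with ⟨h1, h2⟩ | ⟨h1, h2⟩
  · exact Or.inl (Prod.ext h1 h2)
  · exact Or.inr (Prod.ext h1 h2)

lemma pathBound_eq {p : List (ℕ × ℕ)} {x y : ℕ × ℕ} (m : ℕ → ℕ)
    (hx : p.head? = some x) (hy : p.getLast? = some y) :
    pathBound n m p = if y.1 = y.2 then ∑ l ∈ Finset.Icc x.1 y.2, m l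
      else ∑ l ∈ Finset.Icc x.1 n, m l := by
  unfold pathBound
  rw [hx, hy]

lemma fundWt_sum (t u v : ℕ) :
    ∑ l ∈ Finset.Icc u v, fundWt t l = if u ≤ t ∧ t ≤ v then 1 else 0 := by
  unfold fundWt
  rw [Finset.sum_ite_eq' (Finset.Icc u v) t (fun _ => 1)]
  simp [Finset.mem_Icc]

/-! ### list sum facts -/

lemma sum_map_ge_single {s : ℕ × ℕ → ℕ} {p : List (ℕ × ℕ)} {a : ℕ × ℕ} (ha : a ∈ p) :
    s a ≤ (p.map s).sum := by
  apply List.single_le_sum (by simp)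
  exact List.mem_map.2 ⟨a, ha, rfl⟩

lemma sum_map_ge_pair {s : ℕ × ℕ → ℕ} {p : List (ℕ × ℕ)} {a b : ℕ × ℕ}
    (ha : a ∈ p) (hb : b ∈ p) (hab : a ≠ b) : s a + s b ≤ (p.map s).sum := by
  induction p with
  | nil => simp at ha
  | cons x l IH =>
    simp only [List.map_cons, List.sum_cons]
    rcases List.mem_cons.1 ha with rfl | ha'
    · have hb' : b ∈ l := by
        rcases List.mem_cons.1 hb with rfl | h
        · exact absurd rfl hab
        · exact h
      have := sum_map_ge_single (s := s) hb'
      omega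
    · rcases List.mem_cons.1 hb with rfl | hb'
      · have := sum_map_ge_single (s := s) ha'
        omega
      · have := IH ha' hb'
        omega

/-! ### the two path constructions -/

/-- path from `(a₁,a₁)` right to `(a₁,a₂)`, down to `(b₁,a₂)`, right to `(b₁,2n-b₁)` -/
def pathAf (n : ℕ) (a b : ℕ × ℕ) (j : ℕ) : ℕ × ℕ :=
  if j ≤ a.2 - a.1 then (a.1, a.1 + j)
  else if j ≤ (a.2 - a.1) + (b.1 - a.1) then (a.1 + (j - (a.2 - a.1)), a.2)
  else (b.1, a.2 + (j - (a.2 - a.1) - (b.1 - a.1)))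

def pathA (n : ℕ) (a b : ℕ × ℕ) : List (ℕ × ℕ) :=
  (List.range ((a.2 - a.1) + (b.1 - a.1) + ((2*n - b.1) - a.2) + 1)).map (pathAf n a b)

/-- path from `(a₁,a₁)` right to `(a₁,a₂)`, down to `(a₂,a₂)` -/
def pathDf (a : ℕ × ℕ) (j : ℕ) : ℕ × ℕ :=
  if j ≤ a.2 - a.1 then (a.1, a.1 + j)
  else (a.1 + (j - (a.2 - a.1)), a.2)

def pathD (a : ℕ × ℕ) : List (ℕ × ℕ) :=
  (List.range ((a.2 - a.1) + (a.2 - a.1) + 1)).map (pathDf a)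

section PathA

variable {a b : ℕ × ℕ} (h1 : 1 ≤ a.1) (h2 : a.1 ≤ a.2) (h3 : a.1 ≤ b.1)
  (h4 : b.1 ≤ a.2) (h5 : b.1 + a.2 ≤ 2*n)

include h1 h2 h3 h4 h5

lemma pathA_isDyck : IsDyck n (pathA n a b) := by
  obtain ⟨a1, a2⟩ := a
  obtain ⟨b1, b2⟩ := b
  dsimp only at h1 h2 h3 h4 h5
  refine ⟨by unfold pathA; simp, ?_, ?_, ?_, ?_⟩
  · intro x hx
    obtain ⟨j, hj, rfl⟩ := exists_of_mem_map_range _ hx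
    unfold pathAf ValidPair
    split_ifs <;> dsimp only <;> omega
  · refine ⟨a1, ?_⟩
    unfold pathA
    rw [head?_map_range]
    unfold pathAf
    rw [if_pos (by omega)]
    simp
  · unfold pathA
    apply chain'_map_range
    intro j hj
    apply mkDyck
    unfold pathAf
    split_ifs <;> dsimp only <;> omega
  · refine ⟨b1, Or.inr ?_⟩
    unfold pathA
    rw [getLast?_map_range]
    unfold pathAf
    split_ifs with hc1 hc2 <;> dsimp only
    · have : b1 = a1 ∧ 2*n - b1 = a2 := by omega
      rw [show a1 + (a2 - a1 + (b1 - a1) + (2 * n - b1 - a2)) = 2 * n - a1 by omega]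
      rw [this.1]
    · have : 2*n - b1 = a2 := by omega
      rw [show a1 + (a2 - a1 + (b1 - a1) + (2 * n - b1 - a2) - (a2 - a1)) = b1 by omega, ← this]
    · rw [show a2 + (a2 - a1 + (b1 - a1) + (2 * n - b1 - a2) - (a2 - a1) - (b1 - a1))
        = 2*n - b1 by omega]

lemma pathA_head : (pathA n a b).head? = some (a.1, a.1) := by
  unfold pathA
  rw [head?_map_range]
  unfold pathAf
  rw [if_pos (by omega)]
  simp

lemma pathA_last : (pathA n a b).getLast? = some (b.1, 2*n - b.1) := by
  obtain ⟨a1, a2⟩ := a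
  obtain ⟨b1, b2⟩ := b
  dsimp only at h1 h2 h3 h4 h5
  unfold pathA
  rw [getLast?_map_range]
  unfold pathAf
  split_ifs with hc1 hc2 <;> dsimp only
  · have ha : b1 = a1 ∧ 2*n - b1 = a2 := by omega
    rw [show a1 + (a2 - a1 + (b1 - a1) + (2 * n - b1 - a2)) = 2 * n - a1 by omega, ha.1]
  · have ha : 2*n - b1 = a2 := by omega
    rw [show a1 + (a2 - a1 + (b1 - a1) + (2 * n - b1 - a2) - (a2 - a1)) = b1 by omega, ← ha]
  · rw [show a2 + (a2 - a1 + (b1 - a1) + (2 * n - b1 - a2) - (a2 - a1) - (b1 - a1))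
      = 2*n - b1 by omega]

lemma pathA_mem_a : a ∈ pathA n a b := by
  have he : pathAf n a b (a.2 - a.1) = a := by
    unfold pathAf
    rw [if_pos (le_refl _)]
    obtain ⟨a1, a2⟩ := a
    dsimp only at h2 ⊢
    rw [show a1 + (a2 - a1) = a2 by omega]
  have hm := mem_map_range (pathAf n a b)
    (k := (a.2 - a.1) + (b.1 - a.1) + ((2*n - b.1) - a.2) + 1) (j := a.2 - a.1) (by omega)
  rw [he] at hm
  exact hm

lemma pathA_mem_b (h6 : a.2 ≤ b.2) (h7 : b.2 + b.1 ≤ 2*n) : b ∈ pathA n a b := by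
  have he : pathAf n a b ((a.2 - a.1) + (b.1 - a.1) + (b.2 - a.2)) = b := by
    obtain ⟨a1, a2⟩ := a
    obtain ⟨b1, b2⟩ := b
    dsimp only at h1 h2 h3 h4 h5 h6 h7 ⊢
    unfold pathAf
    dsimp only
    split_ifs <;> rw [Prod.mk.injEq] <;> omega
  have hm := mem_map_range (pathAf n a b)
    (k := (a.2 - a.1) + (b.1 - a.1) + ((2*n - b.1) - a.2) + 1)
    (j := (a.2 - a.1) + (b.1 - a.1) + (b.2 - a.2)) (by omega)
  rw [he] at hm
  exact hm

lemma pathA_bound (t : ℕ) (htn : t ≤ n) :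
    pathBound n (fundWt t) (pathA n a b) = if a.1 ≤ t then 1 else 0 := by
  rw [pathBound_eq (fundWt t) (pathA_head h1 h2 h3 h4 h5) (pathA_last h1 h2 h3 h4 h5)]
  dsimp only
  split_ifs with hc1 hc2 hc3 hc4
  · rw [fundWt_sum, if_pos (by omega)]
  · rw [fundWt_sum, if_neg (by omega)]
  · rw [fundWt_sum, if_pos (by omega)]
  · rw [fundWt_sum, if_neg (by omega)]

end PathA

section PathD

variable {a : ℕ × ℕ} (h1 : 1 ≤ a.1) (h2 : a.1 ≤ a.2) (h3 : a.2 ≤ n)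

include h1 h2 h3

lemma pathD_isDyck : IsDyck n (pathD a) := by
  obtain ⟨a1, a2⟩ := a
  dsimp only at h1 h2 h3
  refine ⟨by unfold pathD; simp, ?_, ?_, ?_, ?_⟩
  · intro x hx
    obtain ⟨j, hj, rfl⟩ := exists_of_mem_map_range _ hx
    unfold pathDf ValidPair
    split_ifs <;> dsimp only <;> omega
  · refine ⟨a1, ?_⟩
    unfold pathD
    rw [head?_map_range]
    unfold pathDf
    rw [if_pos (by omega)]
    simp
  · unfold pathD
    apply chain'_map_range
    intro j hj
    apply mkDyck
    unfold pathDf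
    split_ifs <;> dsimp only <;> omega
  · refine ⟨a2, Or.inl ?_⟩
    unfold pathD
    rw [getLast?_map_range]
    unfold pathDf
    split_ifs with hc1 <;> dsimp only
    · have hx : a1 = a2 := by omega
      subst hx
      rw [show a1 + (a1 - a1 + (a1 - a1)) = a1 by omega]
    · rw [show a1 + (a2 - a1 + (a2 - a1) - (a2 - a1)) = a2 by omega]

lemma pathD_head : (pathD a).head? = some (a.1, a.1) := by
  unfold pathD
  rw [head?_map_range]
  unfold pathDf
  rw [if_pos (by omega)]
  simp

lemma pathD_last : (pathD a).getLast? = some (a.2, a.2) := by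
  obtain ⟨a1, a2⟩ := a
  dsimp only at h1 h2 h3
  unfold pathD
  rw [getLast?_map_range]
  unfold pathDf
  split_ifs with hc1 <;> dsimp only
  · have hx : a1 = a2 := by omega
    subst hx
    rw [show a1 + (a1 - a1 + (a1 - a1)) = a1 by omega]
  · rw [show a1 + (a2 - a1 + (a2 - a1) - (a2 - a1)) = a2 by omega]

lemma pathD_mem_a : a ∈ pathD a := by
  have he : pathDf a (a.2 - a.1) = a := by
    unfold pathDf
    rw [if_pos (le_refl _)]
    obtain ⟨a1, a2⟩ := a
    dsimp only at h2 ⊢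
    rw [show a1 + (a2 - a1) = a2 by omega]
  have hm := mem_map_range (pathDf a)
    (k := (a.2 - a.1) + (a.2 - a.1) + 1) (j := a.2 - a.1) (by omega)
  rw [he] at hm
  exact hm

lemma pathD_bound (t : ℕ) :
    pathBound n (fundWt t) (pathD a) = if a.1 ≤ t ∧ t ≤ a.2 then 1 else 0 := by
  rw [pathBound_eq (fundWt t) (pathD_head h1 h2 h3) (pathD_last h1 h2 h3)]
  dsimp only
  rw [if_pos rfl, fundWt_sum]

end PathD

/-! ### analysis of arbitrary Dyck paths -/

lemma mem_of_getLast?' {l : List (ℕ × ℕ)} {a : ℕ × ℕ} (h : l.getLast? = some a) : a ∈ l := by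
  have h2 : a ∈ l.getLast? := Option.mem_def.2 h
  obtain ⟨hne, heq⟩ := List.mem_getLast?_eq_getLast h2
  rw [heq]
  exact List.getLast_mem hne

lemma chain_cons_facts : ∀ {l : List (ℕ × ℕ)} {x : ℕ × ℕ},
    List.Chain' DyckStep (x :: l) → ∀ y ∈ l, x.1 ≤ y.1 ∧ x.2 ≤ y.2 ∧ x.1 + x.2 < y.1 + y.2 := by
  intro l
  induction l with
  | nil => intro x _ y hy; simp at hy
  | cons z l' IH =>
    intro x hch y hy
    have hstep : DyckStep x z := (List.isChain_cons_cons.1 hch).1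
    have hxz : x.1 ≤ z.1 ∧ x.2 ≤ z.2 ∧ x.1 + x.2 < z.1 + z.2 := by
      rcases hstep with h | h <;> rw [h] <;> dsimp only <;> omega
    rcases List.mem_cons.1 hy with rfl | hy'
    · exact hxz
    · have := IH (List.isChain_cons_cons.1 hch).2 y hy'
      omega

lemma chain_last_facts : ∀ {l : List (ℕ × ℕ)}, List.Chain' DyckStep l →
    ∀ x ∈ l, ∀ y : ℕ × ℕ, l.getLast? = some y → x.1 ≤ y.1 ∧ x.2 ≤ y.2 := by
  intro l
  induction l with
  | nil => intro _ x hx; simp at hx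
  | cons z l' IH =>
    intro hch x hx y hy
    rcases l' with _ | ⟨w, l''⟩
    · simp at hy hx
      subst hy; subst hx
      exact ⟨le_refl _, le_refl _⟩
    · rw [List.getLast?_cons_cons] at hy
      rcases List.mem_cons.1 hx with rfl | hx'
      · have hym : y ∈ w :: l'' := mem_of_getLast?' hy
        have := chain_cons_facts hch y hym
        omega
      · exact IH hch.tail x hx' y hy

lemma good_path_sum_le_one {s : ℕ × ℕ → ℕ} (hs : Good n t s) :
    ∀ {p : List (ℕ × ℕ)}, List.Chain' DyckStep p → (p.map s).sum ≤ 1 := by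
  intro p
  induction p with
  | nil => simp
  | cons x l IH =>
    intro hch
    simp only [List.map_cons, List.sum_cons]
    by_cases hx : s x = 0
    · rw [hx]
      have := IH hch.tail
      omega
    · have hzero : ∀ y ∈ l, s y = 0 := by
        intro y hy
        by_contra hsy
        have hf := chain_cons_facts hch y hy
        have := hs.2 x y hx hsy hf.1 hf.2.1
        subst this
        omega
      have hlz : (l.map s).sum = 0 := by
        apply List.sum_eq_zero
        intro z hz
        obtain ⟨y, hy, rfl⟩ := List.mem_map.1 hz
        exact hzero y hy
      have := (hs.1 x hx).2
      omega

/-! ### the characterization -/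

lemma InS_iff_good (ht1 : 1 ≤ t) (htn : t ≤ n) (s : ℕ × ℕ → ℕ) :
    InS n (fundWt t) s ↔ Good n t s := by
  constructor
  · rintro ⟨hvan, hpath⟩
    have hval : ∀ a, s a ≠ 0 → ValidPair n a := by
      intro a ha
      by_contra hv
      exact ha (hvan a hv)
    have hwin : ∀ a, s a ≠ 0 → a.1 ≤ t ∧ t ≤ a.2 ∧ s a ≤ 1 := by
      intro a ha
      obtain ⟨hv1, hv2, hv3⟩ := hval a ha
      have h5 : a.1 + a.2 ≤ 2*n := by omega
      have hDy := pathA_isDyck (a := a) (b := a) hv1 hv2 (le_refl _) hv2 h5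
      have hb := hpath _ hDy
      rw [pathA_bound hv1 hv2 (le_refl _) hv2 h5 t htn] at hb
      have hmem := sum_map_ge_single (s := s) (pathA_mem_a hv1 hv2 (le_refl _) hv2 h5)
      have hat : a.1 ≤ t := by
        by_contra hat
        rw [if_neg hat] at hb
        omega
      rw [if_pos hat] at hb
      refine ⟨hat, ?_, by omega⟩
      by_contra hta
      have h3' : a.2 ≤ n := by omega
      have hDy2 := pathD_isDyck (a := a) hv1 hv2 h3'
      have hb2 := hpath _ hDy2
      rw [pathD_bound hv1 hv2 h3' t, if_neg (by omega)] at hb2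
      have hmem2 := sum_map_ge_single (s := s) (pathD_mem_a hv1 hv2 h3')
      omega
    constructor
    · intro a ha
      have h1 := hwin a ha
      exact ⟨⟨hval a ha, h1.1, h1.2.1⟩, by omega⟩
    · intro a b ha hb hab1 hab2
      by_contra hne
      obtain ⟨ha1, ha2, ha3⟩ := hval a ha
      obtain ⟨hb1, hb2, hb3⟩ := hval b hb
      have hwa := hwin a ha
      have hwb := hwin b hb
      have g4 : b.1 ≤ a.2 := by omega
      have g5 : b.1 + a.2 ≤ 2*n := by omega
      have hDy := pathA_isDyck ha1 ha2 hab1 g4 g5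
      have hbd := hpath _ hDy
      rw [pathA_bound ha1 ha2 hab1 g4 g5 t htn] at hbd
      have hma := pathA_mem_a ha1 ha2 hab1 g4 g5
      have hmb := pathA_mem_b ha1 ha2 hab1 g4 g5 hab2 (by omega)
      have := sum_map_ge_pair (s := s) hma hmb hne
      split_ifs at hbd <;> omega
  · intro hg
    constructor
    · intro a hv
      by_contra ha
      exact hv ((hg.1 a ha).1.1)
    · intro p hDyck
      obtain ⟨hne, hval, ⟨i, hhead⟩, hch, ⟨j, hlast⟩⟩ := hDyck
      obtain ⟨l, rfl⟩ : ∃ l, p = (i, i) :: l := by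
        rcases p with _ | ⟨x, l⟩
        · simp at hhead
        · rw [List.head?_cons] at hhead
          exact ⟨l, by rw [Option.some.inj hhead]⟩
      have hsum0 : ∀ u v : ℕ, ((i,i) :: l).getLast? = some (u, v) → (¬ (i ≤ t) ∨ v < t) →
          (((i,i) :: l).map s).sum = 0 := by
        intro u v hl hcond
        apply List.sum_eq_zero
        intro z hz
        obtain ⟨x, hx, rfl⟩ := List.mem_map.1 hz
        by_contra hsx
        have hw := (hg.1 x hsx).1
        have hfacts : i ≤ x.1 := by
          rcases List.mem_cons.1 hx with rfl | hx'
          · exact le_refl _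
          · exact (chain_cons_facts hch x hx').1
        have hlastf := chain_last_facts hch x hx (u, v) hl
        dsimp only at hlastf
        rcases hcond with hc | hc <;> omega
      rcases hlast with hl | hl
      · rw [pathBound_eq (fundWt t) (by rw [List.head?_cons]) hl]
        dsimp only
        rw [if_pos rfl, fundWt_sum]
        by_cases hc : i ≤ t ∧ t ≤ j
        · rw [if_pos hc]
          exact good_path_sum_le_one hg hch
        · rw [if_neg hc]
          rw [hsum0 j j hl (by omega)]
      · rw [pathBound_eq (fundWt t) (by rw [List.head?_cons]) hl]
        dsimp only
        have hvlast := hval _ (mem_of_getLast?' hl)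
        obtain ⟨hj1, hj2, hj3⟩ := hvlast
        dsimp only at hj1 hj2 hj3
        by_cases hit : i ≤ t
        · have hle := good_path_sum_le_one hg hch
          split_ifs with hd
          · rw [fundWt_sum, if_pos (by omega)]
            exact hle
          · rw [fundWt_sum, if_pos (by omega)]
            exact hle
        · rw [hsum0 j (2*n - j) hl (Or.inl hit)]
          omega

lemma InS_zero_iff (s : ℕ × ℕ → ℕ) : InS n (fundWt 0) s ↔ s = 0 := by
  constructor
  · rintro ⟨hvan, hpath⟩
    funext a
    show s a = 0
    by_cases hv : ValidPair n a
    · obtain ⟨h1, h2, h3⟩ := hv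
      have h5 : a.1 + a.2 ≤ 2*n := by omega
      have hDy := pathA_isDyck (a := a) (b := a) h1 h2 (le_refl _) h2 h5
      have hb := hpath _ hDy
      rw [pathA_bound h1 h2 (le_refl _) h2 h5 0 (Nat.zero_le n), if_neg (by omega)] at hb
      have hmem := sum_map_ge_single (s := s) (pathA_mem_a h1 h2 (le_refl _) h2 h5)
      omega
    · exact hvan a hv
  · rintro rfl
    refine ⟨fun _ _ => rfl, fun p _ => ?_⟩
    have : (p.map (0 : ℕ × ℕ → ℕ)).sum = 0 := by
      apply List.sum_eq_zero
      intro z hz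
      obtain ⟨y, _, rfl⟩ := List.mem_map.1 hz
      rfl
    omega

/-! ### final counting -/

lemma ncard_S0 : {s : ℕ × ℕ → ℕ | InS n (fundWt 0) s}.ncard = 1 := by
  have h : {s : ℕ × ℕ → ℕ | InS n (fundWt 0) s} = {0} := by
    ext s
    rw [Set.mem_setOf_eq, Set.mem_singleton_iff, InS_zero_iff]
  rw [h, Set.ncard_singleton]

lemma ncard_InS (ht1 : 1 ≤ t) (htn : t ≤ n) :
    {s : ℕ × ℕ → ℕ | InS n (fundWt t) s}.ncard + (2*n+1).choose (t-1) = (2*n+1).choose t := by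
  have hset : {s : ℕ × ℕ → ℕ | InS n (fundWt t) s} = {s | Good n t s} :=
    Set.ext (fun s => InS_iff_good ht1 htn s)
  rw [hset, ncard_good_eq ht1 htn]
  have hf := Gset_card_formula (t + (2*n+1-t)) t (2*n+1-t) 0 (le_refl _) (by omega)
  rw [if_pos (by omega), if_pos (by omega), show t - 0 - 1 = t - 1 by omega,
    show t - 0 = t by omega, show t + (2*n+1-t) = 2*n+1 by omega] at hf
  exact hf

lemma main_sum {n : ℕ} (hn : 1 ≤ n) : ∀ i, 1 ≤ i → i ≤ n →
    (∑ k ∈ Finset.range (i / 2 + 1),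
      {s : ℕ × ℕ → ℕ | InS n (fundWt (i - 2 * k)) s}.ncard) = Nat.choose (2 * n) i := by
  intro i
  induction i using Nat.strong_induction_on with
  | _ i IH =>
    intro hi1 hin
    rcases i with _ | _ | i2
    · omega
    · -- i = 1
      rw [show (1 : ℕ) / 2 + 1 = 1 by norm_num, Finset.sum_range_one,
        show (1 : ℕ) - 2 * 0 = 1 by norm_num]
      have h := ncard_InS (n := n) (t := 1) (le_refl _) hn
      rw [show (1 : ℕ) - 1 = 0 by norm_num, Nat.choose_zero_right, Nat.choose_one_right] at h
      have h2 : (2*n).choose 1 = 2*n := Nat.choose_one_right _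
      omega
    · -- i = i2 + 2
      rw [show (i2 + 2) / 2 + 1 = (i2 / 2 + 1) + 1 by omega, Finset.sum_range_succ']
      have hinner : (∑ k ∈ Finset.range (i2 / 2 + 1),
          {s : ℕ × ℕ → ℕ | InS n (fundWt (i2 + 2 - 2 * (k + 1))) s}.ncard)
          = ∑ k ∈ Finset.range (i2 / 2 + 1),
            {s : ℕ × ℕ → ℕ | InS n (fundWt (i2 - 2 * k)) s}.ncard := by
        apply Finset.sum_congr rfl
        intro k hk
        rw [show i2 + 2 - 2 * (k + 1) = i2 - 2 * k by omega]
      rw [hinner, show i2 + 2 - 2 * 0 = i2 + 2 by omega]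
      have hI := ncard_InS (n := n) (t := i2 + 2) (by omega) (by omega)
      rw [show i2 + 2 - 1 = i2 + 1 by omega] at hI
      have hP1 := pascal (2*n) (i2 + 1)
      rw [show i2 + 1 + 1 = i2 + 2 by omega] at hP1
      have hP0 := pascal (2*n) i2
      rcases Nat.eq_zero_or_pos i2 with h0 | hpos
      · subst h0
        rw [show (0 : ℕ) / 2 + 1 = 1 by norm_num, Finset.sum_range_one,
          show (0 : ℕ) - 2 * 0 = 0 by norm_num, ncard_S0]
        have h2 : (2*n).choose 1 = 2*n := Nat.choose_one_right _
        have h3 : (2*n+1).choose 1 = 2*n+1 := Nat.choose_one_right _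
        have h4 : (2*n).choose 0 = 1 := Nat.choose_zero_right _
        norm_num at hI hP1 hP0 ⊢
        omega
      · rw [IH i2 (by omega) (by omega) (by omega)]
        have e1 : (2*n).choose (i2+1+1) = (2*n).choose (i2+2) := rfl
        have e2 : (2*n+1).choose (i2+1+1) = (2*n+1).choose (i2+2) := rfl
        omega

/-- `Σ_{k ≥ 0, i - 2k ≥ 0} #S(ω_{i-2k}) = C(2n, i)` (with `S(ω_0) = {0}`, which is
what `InS n (fundWt 0)` cuts out). -/
theorem stmt9 (n i : ℕ) (hn : 1 ≤ n) (hi : 1 ≤ i) (hin : i ≤ n) :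
    (∑ k ∈ Finset.range (i / 2 + 1),
      {s : ℕ × ℕ → ℕ | InS n (fundWt (i - 2 * k)) s}.ncard) = Nat.choose (2 * n) i :=
  main_sum hn i hi hin

end SpPBW
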